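/- Let M₁ be a path of length l ≥ 1 (with l edges) and let U: [0,1]² → [−1,1] be symmetric measurable with factor kernels U^{s_e} ∈ {U⁺, U⁻} on each edge. Then |t(M₁, U^s)| ≤ ‖d^±‖₂ · ‖U^±‖₂^{l−1}, where t(M₁, U^s) = ∫ ∏_{e=(i,i+1)} U^{s_e}(x_i, x_{i+1}) dx₁ ⋯ dx_{l+1} and d^±(x) = ∫₀¹ U^{±}(x,y) dy with ± the sign of the first edge. -/

import Mathlib

open MeasureTheory

/-- Positive (`true`) or negative (`false`) part of a kernel. -/
noncomputable def kernelPart (U : ℝ → ℝ → ℝ) : Bool → ℝ → ℝ → ℝ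
  | true => fun x y => max (U x y) 0
  | false => fun x y => max (-(U x y)) 0

namespace Stmt12Aux


noncomputable def μ0 : Measure ℝ := volume.restrict (Set.Icc 0 1)

instance : IsProbabilityMeasure μ0 := ⟨by simp [μ0, Real.volume_Icc]⟩

lemma integrable_of_bdd {α : Type*} [MeasurableSpace α] {μ : Measure α} [IsFiniteMeasure μ]
    {f : α → ℝ} (hm : Measurable f) {C : ℝ} (hb : ∀ x, |f x| ≤ C) : Integrable f μ :=
  ⟨hm.aestronglyMeasurable,
    HasFiniteIntegral.of_bounded (C := C) (Filter.Eventually.of_forall (by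
      simpa [Real.norm_eq_abs] using hb))⟩

noncomputable def chain : (n : ℕ) → (Fin n → ℝ → ℝ → ℝ) → ℝ → ℝ
  | 0, _, _ => 1
  | n + 1, V, x => ∫ y, V 0 x y * chain n (fun i => V i.succ) y ∂μ0

lemma insertNth_zero' {n : ℕ} (y0 : ℝ) (z : Fin n → ℝ) :
    Fin.insertNth (α := fun _ => ℝ) 0 y0 z = Fin.cons y0 z := by
  funext j
  induction j using Fin.cases with
  | zero => simp
  | succ k => simpa [Fin.succAbove_zero] using Fin.insertNth_apply_succAbove (i := 0) y0 z k

lemma measurable_consApply {n : ℕ} (j : Fin (n + 1)) :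
    Measurable fun p : ℝ × (Fin n → ℝ) => Fin.cons (α := fun _ => ℝ) p.1 p.2 j := by
  induction j using Fin.cases with
  | zero => simpa using measurable_fst
  | succ k => simp only [Fin.cons_succ]; exact (measurable_pi_apply k).comp measurable_snd

lemma chain_eq : ∀ (n : ℕ) (V : Fin n → ℝ → ℝ → ℝ),
    (∀ i, Measurable (Function.uncurry (V i))) →
    (∀ i x y, 0 ≤ V i x y) → (∀ i x y, V i x y ≤ 1) →
    ∀ x : ℝ,
    (∫ y : Fin n → ℝ,
        ∏ i : Fin n, V i (Fin.cons (α := fun _ => ℝ) x y i.castSucc)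
          (Fin.cons (α := fun _ => ℝ) x y i.succ)
        ∂(Measure.pi fun _ : Fin n => μ0)) = chain n V x
  | 0, V, _, _, _, x => by simp [chain]
  | n + 1, V, hV, h0, h1, x => by
    have ih := chain_eq n (fun i => V i.succ) (fun i => hV i.succ)
      (fun i => h0 i.succ) (fun i => h1 i.succ)
    set F : (Fin (n + 1) → ℝ) → ℝ := fun y =>
      ∏ i : Fin (n + 1), V i (Fin.cons (α := fun _ => ℝ) x y i.castSucc)
        (Fin.cons (α := fun _ => ℝ) x y i.succ) with hF
    have key := measurePreserving_piFinSuccAbove (fun _ : Fin (n + 1) => μ0) 0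
    have hco := (key.symm _).integral_comp
      (MeasurableEquiv.measurableEmbedding _) F
    rw [← hco]
    have hpt : ∀ (a : ℝ) (z : Fin n → ℝ), F (Fin.cons a z)
        = V 0 x a * ∏ i : Fin n,
            V i.succ (Fin.cons (α := fun _ => ℝ) a z i.castSucc)
              (Fin.cons (α := fun _ => ℝ) a z i.succ) := by
      intro a z
      simp only [hF]
      rw [Fin.prod_univ_succ]
      simp [← Fin.succ_castSucc]
    have hsymm : ∀ p : ℝ × (Fin n → ℝ),
        (MeasurableEquiv.piFinSuccAbove (fun _ : Fin (n + 1) => ℝ) 0).symm p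
          = Fin.cons p.1 p.2 := by
      intro p
      simp [MeasurableEquiv.piFinSuccAbove_symm_apply, insertNth_zero', Fin.consEquiv]
    simp_rw [hsymm]
    have hmC : ∀ j : Fin (n + 2),
        Measurable fun p : ℝ × (Fin n → ℝ) =>
          Fin.cons (α := fun _ => ℝ) x (Fin.cons p.1 p.2) j := by
      intro j
      induction j using Fin.cases with
      | zero => simpa using measurable_const
      | succ k => simpa using measurable_consApply k
    have hmF : Measurable fun p : ℝ × (Fin n → ℝ) => F (Fin.cons p.1 p.2) := by
      rw [hF]
      exact Finset.measurable_prod _ fun i _ =>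
        (hV i).comp ((hmC i.castSucc).prodMk (hmC i.succ))
    have hFbd : ∀ y, |F y| ≤ 1 := by
      intro y
      rw [hF]
      have hnn : (0:ℝ) ≤ ∏ i : Fin (n+1),
          V i (Fin.cons (α := fun _ => ℝ) x y i.castSucc)
            (Fin.cons (α := fun _ => ℝ) x y i.succ) :=
        Finset.prod_nonneg fun i _ => h0 i _ _
      have hle : (∏ i : Fin (n+1),
          V i (Fin.cons (α := fun _ => ℝ) x y i.castSucc)
            (Fin.cons (α := fun _ => ℝ) x y i.succ)) ≤ 1 :=
        Finset.prod_le_one (fun i _ => h0 i _ _) (fun i _ => h1 i _ _)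
      exact abs_le.2 ⟨by linarith, hle⟩
    have hInt : Integrable (fun p : ℝ × (Fin n → ℝ) => F (Fin.cons p.1 p.2))
        (μ0.prod (Measure.pi fun _ : Fin n => μ0)) :=
      integrable_of_bdd hmF (C := 1) fun p => hFbd _
    rw [integral_prod _ hInt]
    simp_rw [hpt, integral_const_mul, ih]
    rfl



lemma chain_measurable : ∀ (n : ℕ) (V : Fin n → ℝ → ℝ → ℝ),
    (∀ i, Measurable (Function.uncurry (V i))) → Measurable (chain n V)
  | 0, _, _ => by simpa [chain] using measurable_const
  | n + 1, V, hV => by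
    have ih := chain_measurable n (fun i => V i.succ) (fun i => hV i.succ)
    have hG : StronglyMeasurable fun p : ℝ × ℝ =>
        V 0 p.1 p.2 * chain n (fun i => V i.succ) p.2 :=
      ((hV 0).mul (ih.comp measurable_snd)).stronglyMeasurable
    simpa [chain] using hG.integral_prod_right'.measurable

lemma chain_nonneg : ∀ (n : ℕ) (V : Fin n → ℝ → ℝ → ℝ),
    (∀ i x y, 0 ≤ V i x y) → ∀ x, 0 ≤ chain n V x
  | 0, _, _, _ => by simp [chain]
  | n + 1, V, h0, x => by
    have ih := chain_nonneg n (fun i => V i.succ) (fun i => h0 i.succ)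
    exact integral_nonneg fun y => mul_nonneg (h0 0 x y) (ih y)

lemma chain_le_one : ∀ (n : ℕ) (V : Fin n → ℝ → ℝ → ℝ),
    (∀ i x y, 0 ≤ V i x y) → (∀ i x y, V i x y ≤ 1) → ∀ x, chain n V x ≤ 1
  | 0, _, _, _, _ => by simp [chain]
  | n + 1, V, h0, h1, x => by
    have ih0 := chain_nonneg n (fun i => V i.succ) (fun i => h0 i.succ)
    have ih1 := chain_le_one n (fun i => V i.succ) (fun i => h0 i.succ) (fun i => h1 i.succ)
    have h : chain (n + 1) V x ≤ ∫ _ : ℝ, (1 : ℝ) ∂μ0 := by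
      rw [chain]
      refine integral_mono_of_nonneg
        (Filter.Eventually.of_forall fun y => mul_nonneg (h0 0 x y) (ih0 y))
        (integrable_const 1) (Filter.Eventually.of_forall fun y => ?_)
      calc V 0 x y * chain n (fun i => V i.succ) y ≤ 1 * 1 :=
        mul_le_mul (h1 0 x y) (ih1 y) (ih0 y) zero_le_one
      _ = 1 := by ring
    simpa using h

lemma total_eq (n : ℕ) (V : Fin n → ℝ → ℝ → ℝ)
    (hV : ∀ i, Measurable (Function.uncurry (V i)))
    (h0 : ∀ i x y, 0 ≤ V i x y) (h1 : ∀ i x y, V i x y ≤ 1) :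
    (∫ y : Fin (n + 1) → ℝ, ∏ i : Fin n, V i (y i.castSucc) (y i.succ)
        ∂(Measure.pi fun _ : Fin (n + 1) => μ0))
      = ∫ a, chain n V a ∂μ0 := by
  set G : (Fin (n + 1) → ℝ) → ℝ := fun y => ∏ i : Fin n, V i (y i.castSucc) (y i.succ) with hG
  have key := measurePreserving_piFinSuccAbove (fun _ : Fin (n + 1) => μ0) 0
  have hco := (key.symm _).integral_comp (MeasurableEquiv.measurableEmbedding _) G
  rw [← hco]
  have hsymm : ∀ p : ℝ × (Fin n → ℝ),
      (MeasurableEquiv.piFinSuccAbove (fun _ : Fin (n + 1) => ℝ) 0).symm p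
        = Fin.cons p.1 p.2 := by
    intro p
    simp [MeasurableEquiv.piFinSuccAbove_symm_apply, insertNth_zero', Fin.consEquiv]
  simp_rw [hsymm]
  have hmF : Measurable fun p : ℝ × (Fin n → ℝ) => G (Fin.cons p.1 p.2) := by
    simp only [hG]
    exact Finset.measurable_prod _ fun i _ =>
      (hV i).comp ((measurable_consApply i.castSucc).prodMk (measurable_consApply i.succ))
  have hGbd : ∀ y, |G y| ≤ 1 := by
    intro y
    simp only [hG]
    have hnn : (0:ℝ) ≤ ∏ i : Fin n, V i (y i.castSucc) (y i.succ) :=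
      Finset.prod_nonneg fun i _ => h0 i _ _
    have hle : (∏ i : Fin n, V i (y i.castSucc) (y i.succ)) ≤ 1 :=
      Finset.prod_le_one (fun i _ => h0 i _ _) (fun i _ => h1 i _ _)
    exact abs_le.2 ⟨by linarith, hle⟩
  have hInt : Integrable (fun p : ℝ × (Fin n → ℝ) => G (Fin.cons p.1 p.2))
      (μ0.prod (Measure.pi fun _ : Fin n => μ0)) :=
    integrable_of_bdd hmF (C := 1) fun p => hGbd _
  rw [integral_prod _ hInt]
  refine integral_congr_ae (Filter.Eventually.of_forall fun a => ?_)
  simp only [hG]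
  simpa using chain_eq n V hV h0 h1 a


lemma memL2_of_bdd {α : Type*} [MeasurableSpace α] {μ : Measure α} [IsFiniteMeasure μ]
    {f : α → ℝ} (hm : Measurable f) {C : ℝ} (hb : ∀ x, |f x| ≤ C) :
    MemLp f (ENNReal.ofReal 2) μ :=
  MemLp.of_bound hm.aestronglyMeasurable C (Filter.Eventually.of_forall (by
      simpa [Real.norm_eq_abs] using hb))

lemma cs {α : Type*} [MeasurableSpace α] {μ : Measure α} [IsFiniteMeasure μ] {f g : α → ℝ}
    (hf : Measurable f) (hg : Measurable g)
    (hf0 : ∀ x, 0 ≤ f x) (hf1 : ∀ x, f x ≤ 1) (hg0 : ∀ x, 0 ≤ g x) (hg1 : ∀ x, g x ≤ 1) :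
    ∫ x, f x * g x ∂μ ≤ Real.sqrt (∫ x, f x ^ 2 ∂μ) * Real.sqrt (∫ x, g x ^ 2 ∂μ) := by
  have hpq : Real.HolderConjugate 2 2 := Real.HolderConjugate.two_two
  have hfb : ∀ x, |f x| ≤ 1 := fun x => abs_le.2 ⟨by linarith [hf0 x], hf1 x⟩
  have hgb : ∀ x, |g x| ≤ 1 := fun x => abs_le.2 ⟨by linarith [hg0 x], hg1 x⟩
  have h := integral_mul_le_Lp_mul_Lq_of_nonneg (μ := μ) hpq
    (Filter.Eventually.of_forall hf0) (Filter.Eventually.of_forall hg0)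
    (memL2_of_bdd hf hfb) (memL2_of_bdd hg hgb)
  have h2 : ∀ x : ℝ, x ^ (2 : ℝ) = x ^ 2 := fun x => by
    rw [show (2 : ℝ) = ((2 : ℕ) : ℝ) by norm_num, Real.rpow_natCast]
  simp_rw [h2, ← Real.sqrt_eq_rpow] at h
  exact h

lemma int_sq_le_one {f : ℝ → ℝ} (hm : Measurable f)
    (h0 : ∀ x, 0 ≤ f x) (h1 : ∀ x, f x ≤ 1) : ∫ x, f x ^ 2 ∂μ0 ≤ 1 := by
  have : ∫ x, f x ^ 2 ∂μ0 ≤ ∫ _ : ℝ, (1 : ℝ) ∂μ0 := by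
    refine integral_mono_of_nonneg (Filter.Eventually.of_forall fun x => sq_nonneg _)
      (integrable_const 1) (Filter.Eventually.of_forall fun x => ?_)
    calc f x ^ 2 ≤ 1 ^ 2 := pow_le_pow_left₀ (h0 x) (h1 x) 2
    _ = 1 := one_pow 2
  simpa using this

lemma chain_sq_le (M : ℝ) (hM : 0 ≤ M) : ∀ (n : ℕ) (V : Fin n → ℝ → ℝ → ℝ),
    (∀ i, Measurable (Function.uncurry (V i))) →
    (∀ i x y, 0 ≤ V i x y) → (∀ i x y, V i x y ≤ 1) →
    (∀ i, ∫ p : ℝ × ℝ, V i p.1 p.2 ^ 2 ∂(μ0.prod μ0) ≤ M ^ 2) →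
    ∫ x, chain n V x ^ 2 ∂μ0 ≤ M ^ (2 * n)
  | 0, V, _, _, _, _ => by simp [chain]
  | n + 1, V, hV, h0, h1, hM2 => by
    set g := chain n (fun i => V i.succ) with hg
    have hgm : Measurable g := chain_measurable n _ (fun i => hV i.succ)
    have hg0 : ∀ y, 0 ≤ g y := chain_nonneg n _ (fun i => h0 i.succ)
    have hg1 : ∀ y, g y ≤ 1 := chain_le_one n _ (fun i => h0 i.succ) (fun i => h1 i.succ)
    have ih := chain_sq_le M hM n (fun i => V i.succ) (fun i => hV i.succ)
      (fun i => h0 i.succ) (fun i => h1 i.succ) (fun i => hM2 i.succ)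
    have hQ0 : (0:ℝ) ≤ ∫ y, g y ^ 2 ∂μ0 := integral_nonneg fun y => sq_nonneg _
    have hQ1 : (∫ y, g y ^ 2 ∂μ0) ≤ 1 := int_sq_le_one hgm hg0 hg1
    have hpt : ∀ x, chain (n + 1) V x ^ 2
        ≤ (∫ y, V 0 x y ^ 2 ∂μ0) * ∫ y, g y ^ 2 ∂μ0 := by
      intro x
      have hfm : Measurable fun y => V 0 x y :=
        (hV 0).comp (measurable_const.prodMk measurable_id)
      have hcs := cs (μ := μ0) hfm hgm (fun y => h0 0 x y) (fun y => h1 0 x y) hg0 hg1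
      have h01 : 0 ≤ chain (n + 1) V x := chain_nonneg (n + 1) V h0 x
      have hch : chain (n + 1) V x = ∫ y, V 0 x y * g y ∂μ0 := rfl
      have hP : (0:ℝ) ≤ ∫ y, V 0 x y ^ 2 ∂μ0 := integral_nonneg fun y => sq_nonneg _
      calc chain (n + 1) V x ^ 2
          ≤ (Real.sqrt (∫ y, V 0 x y ^ 2 ∂μ0) * Real.sqrt (∫ y, g y ^ 2 ∂μ0)) ^ 2 := by
            refine pow_le_pow_left₀ h01 ?_ 2
            rw [hch]; exact hcs
        _ = (∫ y, V 0 x y ^ 2 ∂μ0) * ∫ y, g y ^ 2 ∂μ0 := by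
            rw [mul_pow, Real.sq_sqrt hP, Real.sq_sqrt hQ0]
    have hVm2 : Measurable fun p : ℝ × ℝ => V 0 p.1 p.2 ^ 2 := by
      have : (fun p : ℝ × ℝ => V 0 p.1 p.2) = Function.uncurry (V 0) := rfl
      exact ((hV 0).pow_const 2)
    have hDm : Measurable fun x => ∫ y, V 0 x y ^ 2 ∂μ0 :=
      hVm2.stronglyMeasurable.integral_prod_right'.measurable
    have hD0 : ∀ x, (0:ℝ) ≤ ∫ y, V 0 x y ^ 2 ∂μ0 :=
      fun x => integral_nonneg fun y => sq_nonneg _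
    have hD1 : ∀ x, (∫ y, V 0 x y ^ 2 ∂μ0) ≤ 1 := fun x =>
      int_sq_le_one ((hV 0).comp (measurable_const.prodMk measurable_id))
        (fun y => h0 0 x y) (fun y => h1 0 x y)
    have hint1 : Integrable (fun x => chain (n + 1) V x ^ 2) μ0 := by
      refine integrable_of_bdd ((chain_measurable (n + 1) V hV).pow_const 2) (C := 1) fun x => ?_
      have c0 := chain_nonneg (n + 1) V h0 x
      have c1 := chain_le_one (n + 1) V h0 h1 x
      rw [abs_of_nonneg (sq_nonneg _)]
      calc chain (n + 1) V x ^ 2 ≤ 1 ^ 2 := pow_le_pow_left₀ c0 c1 2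
      _ = 1 := one_pow 2
    have hint2 : Integrable (fun x => (∫ y, V 0 x y ^ 2 ∂μ0) * ∫ y, g y ^ 2 ∂μ0) μ0 := by
      refine integrable_of_bdd (hDm.mul_const _) (C := 1) fun x => ?_
      rw [abs_of_nonneg (mul_nonneg (hD0 x) hQ0)]
      calc (∫ y, V 0 x y ^ 2 ∂μ0) * ∫ y, g y ^ 2 ∂μ0 ≤ 1 * 1 :=
        mul_le_mul (hD1 x) hQ1 hQ0 zero_le_one
      _ = 1 := by ring
    have step1 : ∫ x, chain (n + 1) V x ^ 2 ∂μ0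
        ≤ ∫ x, (∫ y, V 0 x y ^ 2 ∂μ0) * ∫ y, g y ^ 2 ∂μ0 ∂μ0 :=
      integral_mono hint1 hint2 hpt
    have step2 : ∫ x, (∫ y, V 0 x y ^ 2 ∂μ0) * ∫ y, g y ^ 2 ∂μ0 ∂μ0
        = (∫ x, ∫ y, V 0 x y ^ 2 ∂μ0 ∂μ0) * ∫ y, g y ^ 2 ∂μ0 := integral_mul_const _ _
    have hIntProd : Integrable (fun p : ℝ × ℝ => V 0 p.1 p.2 ^ 2) (μ0.prod μ0) := by
      refine integrable_of_bdd hVm2 (C := 1) fun p => ?_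
      rw [abs_of_nonneg (sq_nonneg _)]
      calc V 0 p.1 p.2 ^ 2 ≤ 1 ^ 2 := pow_le_pow_left₀ (h0 0 _ _) (h1 0 _ _) 2
      _ = 1 := one_pow 2
    have step3 : (∫ x, ∫ y, V 0 x y ^ 2 ∂μ0 ∂μ0) ≤ M ^ 2 := by
      rw [integral_integral hIntProd]
      exact hM2 0
    calc ∫ x, chain (n + 1) V x ^ 2 ∂μ0
        ≤ (∫ x, ∫ y, V 0 x y ^ 2 ∂μ0 ∂μ0) * ∫ y, g y ^ 2 ∂μ0 := by rw [← step2]; exact step1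
      _ ≤ M ^ 2 * M ^ (2 * n) := by
          refine mul_le_mul step3 ih hQ0 (sq_nonneg M)
      _ = M ^ (2 * (n + 1)) := by rw [← pow_add]; ring_nf


lemma pi_restrict (n : ℕ) :
    (volume : Measure (Fin n → ℝ)).restrict (Set.univ.pi fun _ => Set.Icc 0 1)
      = Measure.pi fun _ : Fin n => μ0 := by
  refine (Measure.pi_eq fun s hs => ?_).symm
  rw [Measure.restrict_apply (MeasurableSet.univ_pi hs), ← Set.pi_inter_distrib, volume_pi,
    Measure.pi_pi]
  exact Finset.prod_congr rfl fun i _ => (Measure.restrict_apply (hs i)).symm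

end Stmt12Aux

open Stmt12Aux in
theorem stmt_12 (l : ℕ) (hl : 1 ≤ l)
    (U : ℝ → ℝ → ℝ) (s : Fin l → Bool)
    (hmeas : Measurable (fun q : ℝ × ℝ => U q.1 q.2))
    (hsym : ∀ x y, U x y = U y x)
    (hbd : ∀ x y, |U x y| ≤ 1) :
    |∫ x in (Set.univ.pi fun _ : Fin (l + 1) => Set.Icc (0 : ℝ) 1),
        ∏ i : Fin l, kernelPart U (s i) (x i.castSucc) (x i.succ)|
      ≤ Real.sqrt (∫ x in Set.Icc (0 : ℝ) 1,
            (∫ y in Set.Icc (0 : ℝ) 1, kernelPart U (s ⟨0, hl⟩) x y) ^ 2) *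
        (max (Real.sqrt (∫ q in Set.Icc (0 : ℝ) 1 ×ˢ Set.Icc (0 : ℝ) 1,
                (kernelPart U true q.1 q.2) ^ 2))
             (Real.sqrt (∫ q in Set.Icc (0 : ℝ) 1 ×ˢ Set.Icc (0 : ℝ) 1,
                (kernelPart U false q.1 q.2) ^ 2))) ^ (l - 1) := by
  obtain ⟨k, rfl⟩ : ∃ k, l = k + 1 := ⟨l - 1, (Nat.succ_pred_eq_of_pos hl).symm⟩
  -- basic facts about the kernel parts
  have hKm : ∀ b, Measurable (Function.uncurry (kernelPart U b)) := by
    intro b; cases b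
    · exact (hmeas.neg).max measurable_const
    · exact hmeas.max measurable_const
  have hK0 : ∀ b x y, 0 ≤ kernelPart U b x y := by
    intro b x y; cases b <;> exact le_max_right _ _
  have hK1 : ∀ b x y, kernelPart U b x y ≤ 1 := by
    intro b x y
    have h := abs_le.1 (hbd x y)
    cases b
    · exact max_le (by linarith [h.1]) zero_le_one
    · exact max_le (by linarith [h.2]) zero_le_one
  have hKsym : ∀ b x y, kernelPart U b x y = kernelPart U b y x := by
    intro b x y; cases b <;> simp [kernelPart, hsym x y]
  set W : Fin (k + 1) → ℝ → ℝ → ℝ := fun i => kernelPart U (s i) with hWdef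
  have hWm : ∀ i, Measurable (Function.uncurry (W i)) := fun i => hKm (s i)
  have hW0 : ∀ i x y, 0 ≤ W i x y := fun i => hK0 (s i)
  have hW1 : ∀ i x y, W i x y ≤ 1 := fun i => hK1 (s i)
  -- rewrite the LHS integral via the chain function
  rw [show (∫ x in (Set.univ.pi fun _ : Fin (k + 1 + 1) => Set.Icc (0 : ℝ) 1),
        ∏ i : Fin (k + 1), kernelPart U (s i) (x i.castSucc) (x i.succ))
      = ∫ x : Fin (k + 1 + 1) → ℝ, ∏ i : Fin (k + 1), W i (x i.castSucc) (x i.succ)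
          ∂(Measure.pi fun _ : Fin (k + 1 + 1) => μ0) by rw [pi_restrict],
    total_eq (k + 1) W hWm hW0 hW1]
  -- the degree function and the tail chain
  set g : ℝ → ℝ := chain k (fun i => W i.succ) with hgdef
  have hgm : Measurable g := chain_measurable k _ (fun i => hWm i.succ)
  have hg0 : ∀ y, 0 ≤ g y := chain_nonneg k _ (fun i => hW0 i.succ)
  have hg1 : ∀ y, g y ≤ 1 := chain_le_one k _ (fun i => hW0 i.succ) (fun i => hW1 i.succ)
  set d : ℝ → ℝ := fun y => ∫ a, W 0 y a ∂μ0 with hddef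
  have hdm : Measurable d := by
    have : StronglyMeasurable (Function.uncurry (W 0)) := (hWm 0).stronglyMeasurable
    exact this.integral_prod_right'.measurable
  have hd0 : ∀ y, 0 ≤ d y := fun y => integral_nonneg fun a => hW0 0 y a
  have hd1 : ∀ y, d y ≤ 1 := by
    intro y
    have h : d y ≤ ∫ _ : ℝ, (1 : ℝ) ∂μ0 :=
      integral_mono_of_nonneg (Filter.Eventually.of_forall fun a => hW0 0 y a)
        (integrable_const 1) (Filter.Eventually.of_forall fun a => hW1 0 y a)
    simpa using h
  -- rewrite the total integral as ∫ d * g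
  have hIntdg : Integrable (Function.uncurry fun a y => W 0 a y * g y) (μ0.prod μ0) := by
    refine integrable_of_bdd ?_ (C := 1) ?_
    · exact (hWm 0).mul (hgm.comp measurable_snd)
    · rintro ⟨a, y⟩
      rw [Function.uncurry]
      exact abs_le.2 ⟨by nlinarith [hW0 0 a y, hg0 y],
        by nlinarith [hW0 0 a y, hg0 y, hW1 0 a y, hg1 y]⟩
  have ht : (∫ a, chain (k + 1) W a ∂μ0) = ∫ y, d y * g y ∂μ0 := by
    have h1 : (∫ a, chain (k + 1) W a ∂μ0) = ∫ a, ∫ y, W 0 a y * g y ∂μ0 ∂μ0 := rfl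
    rw [h1, integral_integral_swap hIntdg]
    refine integral_congr_ae (Filter.Eventually.of_forall fun y => ?_)
    show (∫ a, W 0 a y * g y ∂μ0) = d y * g y
    rw [integral_mul_const]
    congr 1
    rw [hddef]
    exact integral_congr_ae (Filter.Eventually.of_forall fun a => hKsym (s 0) a y)
  rw [ht, abs_of_nonneg (integral_nonneg fun y => mul_nonneg (hd0 y) (hg0 y))]
  -- Cauchy–Schwarz
  have hcs := cs (μ := μ0) hdm hgm hd0 hd1 hg0 hg1
  -- the L² bound on the tail chain
  set Mx : ℝ := max (Real.sqrt (∫ q in Set.Icc (0 : ℝ) 1 ×ˢ Set.Icc (0 : ℝ) 1,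
      (kernelPart U true q.1 q.2) ^ 2))
    (Real.sqrt (∫ q in Set.Icc (0 : ℝ) 1 ×ˢ Set.Icc (0 : ℝ) 1,
      (kernelPart U false q.1 q.2) ^ 2)) with hMx
  have hMx0 : 0 ≤ Mx := le_trans (Real.sqrt_nonneg _) (le_max_left _ _)
  have hconv : ∀ b : Bool, (∫ q in Set.Icc (0 : ℝ) 1 ×ˢ Set.Icc (0 : ℝ) 1,
      (kernelPart U b q.1 q.2) ^ 2) = ∫ p : ℝ × ℝ, kernelPart U b p.1 p.2 ^ 2 ∂(μ0.prod μ0) := by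
    intro b
    rw [μ0, Measure.prod_restrict, ← Measure.volume_eq_prod]
  have hM2 : ∀ b : Bool, (∫ p : ℝ × ℝ, kernelPart U b p.1 p.2 ^ 2 ∂(μ0.prod μ0)) ≤ Mx ^ 2 := by
    intro b
    have hA0 : (0:ℝ) ≤ ∫ p : ℝ × ℝ, kernelPart U b p.1 p.2 ^ 2 ∂(μ0.prod μ0) :=
      integral_nonneg fun p => sq_nonneg _
    have hs : Real.sqrt (∫ p : ℝ × ℝ, kernelPart U b p.1 p.2 ^ 2 ∂(μ0.prod μ0)) ≤ Mx := by
      cases b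
      · rw [hMx]; exact le_trans (le_of_eq (by rw [hconv])) (le_max_right _ _)
      · rw [hMx]; exact le_trans (le_of_eq (by rw [hconv])) (le_max_left _ _)
    calc (∫ p : ℝ × ℝ, kernelPart U b p.1 p.2 ^ 2 ∂(μ0.prod μ0))
        = Real.sqrt (∫ p : ℝ × ℝ, kernelPart U b p.1 p.2 ^ 2 ∂(μ0.prod μ0)) ^ 2 :=
          (Real.sq_sqrt hA0).symm
      _ ≤ Mx ^ 2 := pow_le_pow_left₀ (Real.sqrt_nonneg _) hs 2
  have hgsq : (∫ y, g y ^ 2 ∂μ0) ≤ Mx ^ (2 * k) := by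
    rw [hgdef]
    exact chain_sq_le Mx hMx0 k (fun i => W i.succ) (fun i => hWm i.succ)
      (fun i => hW0 i.succ) (fun i => hW1 i.succ) (fun i => hM2 (s i.succ))
  have hsqrtg : Real.sqrt (∫ y, g y ^ 2 ∂μ0) ≤ Mx ^ k := by
    have := Real.sqrt_le_sqrt hgsq
    rwa [show 2 * k = k * 2 by ring, pow_mul, Real.sqrt_sq (pow_nonneg hMx0 k)] at this
  have hfinal : (∫ y, d y * g y ∂μ0) ≤ Real.sqrt (∫ y, d y ^ 2 ∂μ0) * Mx ^ k :=
    le_trans hcs (mul_le_mul_of_nonneg_left hsqrtg (Real.sqrt_nonneg _))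
  -- identify with the statement's RHS
  have hfin0 : (⟨0, hl⟩ : Fin (k + 1)) = 0 := rfl
  have hdeq : (∫ x in Set.Icc (0 : ℝ) 1,
      (∫ y in Set.Icc (0 : ℝ) 1, kernelPart U (s ⟨0, hl⟩) x y) ^ 2) = ∫ y, d y ^ 2 ∂μ0 := by
    rw [hfin0]
    rfl
  rw [hdeq, show k + 1 - 1 = k from rfl]
  exact hfinal
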